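/- Let T_1 = (M, E_1) and T_2 = (M, E_2) be two clique trees of a chordal claw-free graph G = (V,E). Then for every vertex v ∈ V, the induced subgraphs T_1[M_v] and T_2[M_v] are equal, i.e., they have exactly the same edges. -/

import Mathlib

open SimpleGraph

/-- A graph is *chordal* if every cycle of length at least 4 has a chord, i.e. an
edge of the graph joining two vertices of the cycle that is not an edge of the cycle. -/
def IsChordal {V : Type*} (G : SimpleGraph V) : Prop :=
  ∀ (v : V) (c : G.Walk v v), c.IsCycle → 4 ≤ c.length →
    ∃ u w : V, u ∈ c.support ∧ w ∈ c.support ∧ G.Adj u w ∧ s(u, w) ∉ c.edges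

/-- A graph is *claw-free* if it has no induced subgraph isomorphic to the
complete bipartite graph `K_{1,3}`. -/
def ClawFree {V : Type*} (G : SimpleGraph V) : Prop :=
  IsEmpty (completeBipartiteGraph (Fin 1) (Fin 3) ↪g G)

/-- A *max clique* of `G` is a maximal clique. -/
def IsMaximalClique {V : Type*} (G : SimpleGraph V) (s : Set V) : Prop :=
  G.IsClique s ∧ ∀ t : Set V, G.IsClique t → s ⊆ t → s = t

/-- The type of max cliques of `G`. -/
abbrev MaxClique {V : Type*} (G : SimpleGraph V) : Type _ :=
  {s : Set V // IsMaximalClique G s}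

/-- `M_v`: the set of max cliques of `G` containing the vertex `v`. -/
def cliquesOf {V : Type*} (G : SimpleGraph V) (v : V) : Set (MaxClique G) :=
  {A | v ∈ A.1}

/-- A *clique tree* of `G`: a tree whose vertices are the max cliques of `G` such
that for every vertex `v` of `G` the subgraph induced by `M_v` is connected. -/
structure IsCliqueTree {V : Type*} (G : SimpleGraph V)
    (T : SimpleGraph (MaxClique G)) : Prop where
  isTree : T.IsTree
  induced_connected : ∀ v : V, (T.induce (cliquesOf G v)).Connected

/-- The subgraph of `T` induced by `S` is a path in `T`: there is a path of `T`
whose vertices are exactly `S` and whose edges are exactly the edges of `T`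
between vertices of `S`. -/
def InducedPath {M : Type*} (T : SimpleGraph M) (S : Set M) : Prop :=
  ∃ (a b : M) (p : T.Walk a b), p.IsPath ∧ (∀ A, A ∈ p.support ↔ A ∈ S) ∧
    ∀ A B, A ∈ S → B ∈ S → (T.Adj A B ↔ s(A, B) ∈ p.edges)

/-- `B` is a *star clique*: every vertex of `B` is contained in at most one
neighbor of `B` in the clique tree `T`. -/
def IsStarClique {V : Type*} (G : SimpleGraph V) (T : SimpleGraph (MaxClique G))
    (B : MaxClique G) : Prop :=
  ∀ v ∈ B.1, ∀ A A' : MaxClique G, T.Adj B A → T.Adj B A' →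
    v ∈ A.1 → v ∈ A'.1 → A = A'

/-- `B` is a *fork clique*: `B` has degree 3 in the clique tree `T`, for every
vertex `v ∈ B` there are two distinct neighbors `A, A'` of `B` with
`M_v = {B, A, A'}`, and for all distinct neighbors `A, A'` of `B` there is a
vertex `v` with `M_v = {B, A, A'}`. -/
def IsForkClique {V : Type*} (G : SimpleGraph V) (T : SimpleGraph (MaxClique G))
    (B : MaxClique G) : Prop :=
  (T.neighborSet B).ncard = 3 ∧
  (∀ v ∈ B.1, ∃ A A' : MaxClique G, A ≠ A' ∧ T.Adj B A ∧ T.Adj B A' ∧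
      cliquesOf G v = {B, A, A'}) ∧
  ∀ A A' : MaxClique G, T.Adj B A → T.Adj B A' → A ≠ A' →
      ∃ v : V, cliquesOf G v = {B, A, A'}

/-- The paths `T[S₁]` and `T[S₂]` *fork in `A`*: there is a fork
`(A', A, {A_P, A_Q})`, i.e. `A', A, A_P` are consecutive vertices of the path
`T[S₁]`, `A', A, A_Q` are consecutive vertices of the path `T[S₂]`,
`A_P` does not occur in `T[S₂]` and `A_Q` does not occur in `T[S₁]`. -/
def ForkAt {M : Type*} (T : SimpleGraph M) (S₁ S₂ : Set M) (A : M) : Prop :=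
  ∃ A' AP AQ : M, A' ∈ S₁ ∧ A' ∈ S₂ ∧ A ∈ S₁ ∧ A ∈ S₂ ∧ AP ∈ S₁ ∧ AQ ∈ S₂ ∧
    T.Adj A' A ∧ T.Adj A AP ∧ T.Adj A AQ ∧ A' ≠ AP ∧ A' ≠ AQ ∧ AP ∉ S₂ ∧ AQ ∉ S₁

/-- `A₁, A₂, A₃` form a *fork triangle* around `B`. -/
def FormsForkTriangle {V : Type*} (G : SimpleGraph V) (T : SimpleGraph (MaxClique G))
    (A₁ A₂ A₃ B : MaxClique G) : Prop :=
  A₁ ≠ A₂ ∧ A₁ ≠ A₃ ∧ A₂ ≠ A₃ ∧ T.Adj B A₁ ∧ T.Adj B A₂ ∧ T.Adj B A₃ ∧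
  (∃ u : V, cliquesOf G u = {A₁, B, A₂}) ∧
  (∃ v : V, cliquesOf G v = {A₂, B, A₃}) ∧
  (∃ w : V, cliquesOf G w = {A₃, B, A₁})

/-- `B` has a fork triangle. -/
def HasForkTriangle {V : Type*} (G : SimpleGraph V) (T : SimpleGraph (MaxClique G))
    (B : MaxClique G) : Prop :=
  ∃ A₁ A₂ A₃ : MaxClique G, FormsForkTriangle G T A₁ A₂ A₃ B

/-- In the tree `T` rooted at `R`, `B` is an ancestor of `A` (equivalently, `A` is
a descendant of `B`): `B` lies on the unique path from `R` to `A`.  Every vertex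
is an ancestor/descendant of itself. -/
def IsAncestor {M : Type*} (T : SimpleGraph M) (R A B : M) : Prop :=
  ∀ p : T.Walk R A, p.IsPath → B ∈ p.support

/-- In the tree `T` rooted at `R`, `A` is a child of `P`. -/
def IsChildOf {M : Type*} (T : SimpleGraph M) (R A P : M) : Prop :=
  T.Adj P A ∧ IsAncestor T R A P

/-- `R` is a leaf of `T`: it has exactly one neighbor. -/
def IsLeaf {M : Type*} (T : SimpleGraph M) (R : M) : Prop :=
  (T.neighborSet R).ncard = 1

/-- The triple `(v₁, v₂, v₃)` *spans* the max clique `A`: `A` is the only max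
clique of `G` containing `v₁`, `v₂` and `v₃`. -/
def Spans {V : Type*} (G : SimpleGraph V) (v₁ v₂ v₃ : V) (A : Set V) : Prop :=
  IsMaximalClique G A ∧ v₁ ∈ A ∧ v₂ ∈ A ∧ v₃ ∈ A ∧
    ∀ B : Set V, IsMaximalClique G B → v₁ ∈ B → v₂ ∈ B → v₃ ∈ B → B = A

section Aux

variable {V : Type*} [Fintype V] {G : SimpleGraph V}

/-- Every clique extends to a maximal clique (finite vertex set). -/
lemma exists_maxClique_superset (s : Set V) (hs : G.IsClique s) :
    ∃ D : MaxClique G, s ⊆ D.1 := by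
  classical
  have hfin : ({t : Set V | G.IsClique t ∧ s ⊆ t}).Finite := Set.toFinite _
  obtain ⟨D, hD, hmax⟩ :=
    Set.Finite.exists_maximalFor id _ hfin ⟨s, hs, subset_rfl⟩
  exact ⟨⟨D, hD.1, fun t ht hsub => subset_antisymm hsub (hmax ⟨ht, hD.2.trans hsub⟩ hsub)⟩, hD.2⟩

lemma MaxClique.adj (A : MaxClique G) {x y : V} (hx : x ∈ A.1) (hy : y ∈ A.1)
    (hne : x ≠ y) : G.Adj x y := A.2.1 hx hy hne

lemma MaxClique.not_subset {A B : MaxClique G} (h : A ≠ B) : ¬ A.1 ⊆ B.1 := by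
  intro hsub
  exact h (Subtype.ext (A.2.2 B.1 B.2.1 hsub))

/-- A claw gives a contradiction with claw-freeness. -/
lemma claw_contradiction (hcf : ClawFree G) {v a b c : V}
    (hva : G.Adj v a) (hvb : G.Adj v b) (hvc : G.Adj v c)
    (hab : ¬ G.Adj a b) (hac : ¬ G.Adj a c) (hbc : ¬ G.Adj b c)
    (hab' : a ≠ b) (hac' : a ≠ c) (hbc' : b ≠ c) : False := by
  have hba : ¬ G.Adj b a := fun h => hab h.symm
  have hca : ¬ G.Adj c a := fun h => hac h.symm
  have hcb : ¬ G.Adj c b := fun h => hbc h.symm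
  apply hcf.false
  refine ⟨⟨Sum.elim (fun _ => v) (![a, b, c]), ?_⟩, ?_⟩
  · rintro (x | x) (y | y) h <;> simp only [Sum.elim_inl, Sum.elim_inr] at h
    · simp [Subsingleton.elim x y]
    · exfalso; fin_cases y
      · exact hva.ne (by simpa using h)
      · exact hvb.ne (by simpa using h)
      · exact hvc.ne (by simpa using h)
    · exfalso; fin_cases x
      · exact hva.ne (by simpa using h.symm)
      · exact hvb.ne (by simpa using h.symm)
      · exact hvc.ne (by simpa using h.symm)
    · fin_cases x <;> fin_cases y <;> simp_all
  · rintro (x | x) (y | y)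
    · simp [completeBipartiteGraph, DFunLike.coe]
    · fin_cases y <;> simp [completeBipartiteGraph, DFunLike.coe, hva, hvb, hvc]
    · fin_cases x <;> simp [completeBipartiteGraph, DFunLike.coe, hva.symm, hvb.symm, hvc.symm]
    · fin_cases x <;> fin_cases y <;>
        simp [completeBipartiteGraph, DFunLike.coe, hab, hac, hbc, hba, hca, hcb]

end Aux

section CliqueTree

variable {V : Type*} [Fintype V] {G : SimpleGraph V} {T : SimpleGraph (MaxClique G)}

open SimpleGraph.Walk in
lemma IsCliqueTree.mem_of_mem_support (hT : IsCliqueTree G T) {X Y : MaxClique G} {u : V}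
    (hX : u ∈ X.1) (hY : u ∈ Y.1) {p : T.Walk X Y} (hp : p.IsPath)
    {D : MaxClique G} (hD : D ∈ p.support) : u ∈ D.1 := by
  classical
  obtain ⟨w⟩ := (hT.induced_connected u).preconnected ⟨X, hX⟩ ⟨Y, hY⟩
  let w' : T.Walk X Y := w.map (SimpleGraph.Embedding.induce (cliquesOf G u)).toHom
  have hsup : ∀ Z ∈ w'.support, Z ∈ cliquesOf G u := by
    intro Z hZ
    rw [show w'.support = _ from Walk.support_map _ _] at hZ
    obtain ⟨z, hz, rfl⟩ := List.mem_map.1 hZ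
    exact z.2
  obtain ⟨p0, hp0, hun⟩ := hT.isTree.existsUnique_path X Y
  have h1 : p = p0 := hun p hp
  have h2 : w'.bypass = p0 := hun w'.bypass w'.bypass_isPath
  refine hsup D (w'.support_bypass_subset ?_)
  rw [h2, ← h1]
  exact hD

lemma no_third_clique_sided (hT : IsCliqueTree G T) (hcf : ClawFree G)
    {A B C : MaxClique G} (hadj : T.Adj A B) (hsub : A.1 ∩ B.1 ⊆ C.1)
    (hCA : C ≠ A) (hCB : C ≠ B) {v : V} (hvA : v ∈ A.1) (hvB : v ∈ B.1)
    {pAC : T.Walk A C} (hpAC : pAC.IsPath) (hside : B ∈ pAC.support) : False := by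
  classical
  obtain ⟨a, haA, haC⟩ := Set.not_subset.1 (MaxClique.not_subset hCA.symm)
  have haB : a ∉ B.1 := fun h => haC (hsub ⟨haA, h⟩)
  have hvC : v ∈ C.1 := hsub ⟨hvA, hvB⟩
  -- choose c ∈ C \ B and b ∈ B with b not adjacent to c
  obtain ⟨c, hcC, hcB, b, hbB, hbc⟩ :
      ∃ c ∈ C.1, c ∉ B.1 ∧ ∃ b ∈ B.1, ¬ G.Adj b c := by
    by_contra hcon
    push_neg at hcon
    obtain ⟨c0, hc0C, hc0B⟩ := Set.not_subset.1 (MaxClique.not_subset hCB)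
    have hcl : G.IsClique (insert c0 B.1) :=
      B.2.1.insert fun b hb _ => (hcon c0 hc0C hc0B b hb).symm
    have := B.2.2 _ hcl (Set.subset_insert _ _)
    exact hc0B (this ▸ Set.mem_insert c0 B.1)
  have hbcne : b ≠ c := fun h => hcB (h ▸ hbB)
  have hbA : b ∉ A.1 := fun h => hbc (C.adj (hsub ⟨h, hbB⟩) hcC hbcne)
  have hbC : b ∉ C.1 := fun h => hbc (C.adj h hcC hbcne)
  -- a is not adjacent to b
  have hab : ¬ G.Adj a b := by
    intro h
    obtain ⟨D, hD⟩ := exists_maxClique_superset {a, b} (isClique_pair.2 fun _ => h)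
    have haD : a ∈ D.1 := hD (by simp)
    have hbD : b ∈ D.1 := hD (by simp)
    obtain ⟨pAD, hpAD, _⟩ := hT.isTree.existsUnique_path A D
    have hBnot : B ∉ pAD.support := fun hmem =>
      haB (hT.mem_of_mem_support haA haD hpAD hmem)
    have hconsPath : (Walk.cons hadj.symm pAD).IsPath := hpAD.cons hBnot
    have : b ∈ A.1 := hT.mem_of_mem_support hbB hbD hconsPath (by
      rw [Walk.support_cons]
      exact List.mem_cons_of_mem _ pAD.start_mem_support)
    exact hbA this
  -- a is not adjacent to c
  have hac : ¬ G.Adj a c := by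
    intro h
    obtain ⟨D, hD⟩ := exists_maxClique_superset {a, c} (isClique_pair.2 fun _ => h)
    have haD : a ∈ D.1 := hD (by simp)
    have hcD : c ∈ D.1 := hD (by simp)
    obtain ⟨pAD, hpAD, _⟩ := hT.isTree.existsUnique_path A D
    obtain ⟨pDC, hpDC, _⟩ := hT.isTree.existsUnique_path D C
    have hBnot : B ∉ pAD.support := fun hmem =>
      haB (hT.mem_of_mem_support haA haD hpAD hmem)
    obtain ⟨p0, hp0, hun⟩ := hT.isTree.existsUnique_path A C
    have h1 : pAC = p0 := hun pAC hpAC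
    have h2 : (pAD.append pDC).bypass = p0 :=
      hun _ (Walk.bypass_isPath _)
    have hBapp : B ∈ (pAD.append pDC).support :=
      (Walk.support_bypass_subset _) (by rw [h2, ← h1]; exact hside)
    have hBDC : B ∈ pDC.support := by
      rcases (Walk.mem_support_append_iff _ _).1 hBapp with h | h
      · exact absurd h hBnot
      · exact h
    exact hcB (hT.mem_of_mem_support hcD hcC hpDC hBDC)
  -- assemble the claw
  have hva : G.Adj v a := A.adj hvA haA (fun h => haB (h ▸ hvB))
  have hvb : G.Adj v b := B.adj hvB hbB (fun h => hbA (h ▸ hvA))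
  have hvc : G.Adj v c := C.adj hvC hcC (fun h => hcB (h ▸ hvB))
  exact claw_contradiction hcf hva hvb hvc hab hac hbc
    (fun h => hbA (h ▸ haA)) (fun h => haC (h.symm ▸ hcC)) hbcne

lemma no_third_clique (hT : IsCliqueTree G T) (hcf : ClawFree G)
    {A B C : MaxClique G} (hadj : T.Adj A B) (hsub : A.1 ∩ B.1 ⊆ C.1)
    (hCA : C ≠ A) (hCB : C ≠ B) {v : V} (hvA : v ∈ A.1) (hvB : v ∈ B.1) : False := by
  obtain ⟨pAC, hpAC, _⟩ := hT.isTree.existsUnique_path A C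
  by_cases hside : B ∈ pAC.support
  · exact no_third_clique_sided hT hcf hadj hsub hCA hCB hvA hvB hpAC hside
  · exact no_third_clique_sided hT hcf hadj.symm
      (by rw [Set.inter_comm]; exact hsub) hCB hCA hvB hvA
      ((hpAC.cons hside : (Walk.cons hadj.symm pAC).IsPath))
      (by rw [Walk.support_cons]; exact List.mem_cons_of_mem _ pAC.start_mem_support)

lemma adj_transfer {T₁ T₂ : SimpleGraph (MaxClique G)}
    (hT₁ : IsCliqueTree G T₁) (hT₂ : IsCliqueTree G T₂) (hcf : ClawFree G)
    {A B : MaxClique G} {v : V} (hvA : v ∈ A.1) (hvB : v ∈ B.1)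
    (h12 : T₁.Adj A B) : T₂.Adj A B := by
  obtain ⟨p, hp, _⟩ := hT₂.isTree.existsUnique_path A B
  cases p with
  | nil => exact absurd rfl h12.ne
  | @cons _ C _ h q =>
    cases q with
    | nil => exact h
    | cons h' q' =>
      exfalso
      rw [Walk.cons_isPath_iff] at hp
      obtain ⟨hp', hAnot⟩ := hp
      have hCA : C ≠ A := fun e => hAnot (e ▸ (Walk.cons h' q').start_mem_support)
      rw [Walk.cons_isPath_iff] at hp'
      obtain ⟨hq', hCnot⟩ := hp'
      have hCB : C ≠ B := fun e => hCnot (e ▸ q'.end_mem_support)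
      have hpfull : (Walk.cons h (Walk.cons h' q')).IsPath := by
        rw [Walk.cons_isPath_iff, Walk.cons_isPath_iff]
        exact ⟨⟨hq', hCnot⟩, hAnot⟩
      have hCsupp : C ∈ (Walk.cons h (Walk.cons h' q')).support := by
        rw [Walk.support_cons]
        exact List.mem_cons_of_mem _ (Walk.cons h' q').start_mem_support
      have hsub : A.1 ∩ B.1 ⊆ C.1 := fun u hu =>
        hT₂.mem_of_mem_support hu.1 hu.2 hpfull hCsupp
      exact no_third_clique hT₁ hcf h12 hsub hCA hCB hvA hvB

end CliqueTree

/-- Let `T₁` and `T₂` be clique trees of a chordal claw-free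
graph `G`.  Then for every vertex `v`, the induced subgraphs `T₁[M_v]` and
`T₂[M_v]` have exactly the same edges. -/
theorem induced_subgraphs_eq {V : Type*} [Fintype V] [Nonempty V]
    (G : SimpleGraph V) (hch : IsChordal G) (hcf : ClawFree G)
    (T₁ T₂ : SimpleGraph (MaxClique G))
    (hT₁ : IsCliqueTree G T₁) (hT₂ : IsCliqueTree G T₂) (v : V)
    (A B : MaxClique G) (hA : A ∈ cliquesOf G v) (hB : B ∈ cliquesOf G v) :
    T₁.Adj A B ↔ T₂.Adj A B :=
  ⟨adj_transfer hT₁ hT₂ hcf hA hB, adj_transfer hT₂ hT₁ hcf hA hB⟩
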